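/- arXiv:2008.01609 — 5 statements merged into one kernel-verified Lean document; each statement's English description precedes it below -/
import Mathlib

section
/- For any locally complete graph-like justification J in a justification frame and any defined fact x labelling an internal node of J, there exists a connected, locally complete graph-like justification J' with x as a root such that for every interpretation I, the value of x by J under I is less than or equal (in the truth order) to the value of x by J' under I. -/
namespace JT

open scoped Classical

/-- Three truth values: 0 = 𝐟, 1 = 𝐮, 2 = 𝐭, with the truth order. -/
abbrev TV := Fin 3

/-- Complement on truth values: swaps 𝐭 and 𝐟, fixes 𝐮. -/
def TV.neg (v : TV) : TV := 2 - v

/-- A justification frame over a fact space `F`. -/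
structure JFrame (F : Type) where
  compl : F → F
  compl_invol : ∀ x, compl (compl x) = x
  tLit : F
  fLit : F
  uLit : F
  compl_t : compl tLit = fLit
  compl_u : compl uLit = uLit
  lit_distinct : tLit ≠ fLit ∧ tLit ≠ uLit ∧ fLit ≠ uLit
  defined : Set F
  defined_compl : ∀ x ∈ defined, compl x ∈ defined
  t_not_def : tLit ∉ defined
  f_not_def : fLit ∉ defined
  u_not_def : uLit ∉ defined
  rules : Set (F × Set F)
  rules_head : ∀ r ∈ rules, r.1 ∈ defined
  rules_body_ne : ∀ r ∈ rules, r.2.Nonempty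
  rules_ex : ∀ x ∈ defined, ∃ A : Set F, (x, A) ∈ rules

variable {F : Type}

def JFrame.openF (JF : JFrame F) : Set F := JF.definedᶜ

/-- A (three-valued) interpretation of the fact space. -/
structure Interp (JF : JFrame F) where
  val : F → TV
  val_compl : ∀ x, val (JF.compl x) = TV.neg (val x)
  val_t : val JF.tLit = 2
  val_f : val JF.fLit = 0
  val_u : val JF.uLit = 1

/-- Branches: finite (the whole finite sequence, as a list) or infinite. -/
inductive Branch (F : Type) where
  | fin : List F → Branch F
  | inf : (ℕ → F) → Branch F

def Branch.startsAt : Branch F → F → Prop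
  | .fin l, x => l.head? = some x
  | .inf s, x => s 0 = x

/-- `b` is a `JF`-branch: an infinite sequence in `F_d`, or a finite nonempty
sequence in `F_d` followed by an open fact. -/
def JFrame.IsBranch (JF : JFrame F) : Branch F → Prop
  | .fin l => 2 ≤ l.length ∧ (∀ a ∈ l.dropLast, a ∈ JF.defined) ∧
      (∀ e, l.getLast? = some e → e ∉ JF.defined)
  | .inf s => ∀ n, s n ∈ JF.defined

/-- Prepend a finite path `p` to a branch. -/
def Branch.prepend (p : List F) : Branch F → Branch F
  | .fin l => .fin (p ++ l)
  | .inf s => .inf (fun n => if h : n < p.length then p.get ⟨n, h⟩ else s (n - p.length))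

/-- Elementwise complement of a branch. -/
def Branch.compl (JF : JFrame F) : Branch F → Branch F
  | .fin l => .fin (l.map JF.compl)
  | .inf s => .inf (fun n => JF.compl (s n))

/-- A branch evaluation is consistent if `B(~b) = ~B(b)`. -/
def JFrame.ConsistentBE (JF : JFrame F) (B : Branch F → F) : Prop :=
  ∀ b : Branch F, JF.IsBranch b → B (Branch.compl JF b) = JF.compl (B b)

/-- A graph-like justification (labels are injective, so nodes are facts). -/
structure GraphJust (JF : JFrame F) where
  nodes : Set F
  edges : Set (F × F)
  edges_mem : ∀ e ∈ edges, e.1 ∈ nodes ∧ e.2 ∈ nodes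
  rule_of_internal : ∀ x ∈ nodes, (∃ y, (x, y) ∈ edges) →
      (x, {y | (x, y) ∈ edges}) ∈ JF.rules

namespace GraphJust
variable {JF : JFrame F}

def LocallyComplete (J : GraphJust JF) : Prop :=
  ∀ x ∈ J.nodes, x ∈ JF.defined → ∃ y, (x, y) ∈ J.edges

def Connected (J : GraphJust JF) : Prop :=
  ∀ x ∈ J.nodes, ∀ y ∈ J.nodes,
    Relation.ReflTransGen (fun a b => (a, b) ∈ J.edges ∨ (b, a) ∈ J.edges) x y

def IsRoot (J : GraphJust JF) (x : F) : Prop :=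
  x ∈ J.nodes ∧ ∀ y ∈ J.nodes, Relation.ReflTransGen (fun a b => (a, b) ∈ J.edges) x y

/-- `J`-branches starting in `x`: maximal paths in `J` from `x`. -/
def IsBranchFrom (J : GraphJust JF) (x : F) : Branch F → Prop
  | .fin l => l.head? = some x ∧ (∀ a ∈ l, a ∈ J.nodes) ∧
      List.Chain' (fun a b => (a, b) ∈ J.edges) l ∧
      (∀ e, l.getLast? = some e → ∀ y, (e, y) ∉ J.edges)
  | .inf s => s 0 = x ∧ (∀ n, s n ∈ J.nodes) ∧ (∀ n, (s n, s (n+1)) ∈ J.edges)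

/-- The value of `x` by `J` under `I`. -/
noncomputable def val (J : GraphJust JF) (B : Branch F → F) (x : F) (I : Interp JF) : TV :=
  ⨅ b ∈ {b | J.IsBranchFrom x b}, I.val (B b)

end GraphJust

/-- Underlying undirected simple graph of a directed relation. -/
def symGraph {α : Type} (e : α → α → Prop) : SimpleGraph α where
  Adj a b := a ≠ b ∧ (e a b ∨ e b a)
  symm := ⟨fun _ _ h => ⟨Ne.symm h.1, h.2.symm⟩⟩
  loopless := ⟨fun _ h => h.1 rfl⟩

/-- A tree-like justification: a directed labelled graph whose underlying
undirected graph is a forest. -/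
structure TreeJust (JF : JFrame F) where
  Node : Type
  edge : Node → Node → Prop
  label : Node → F
  rule_of_internal : ∀ n, (∃ m, edge n m) →
      (label n, {y | ∃ m, edge n m ∧ label m = y}) ∈ JF.rules
  forest : (symGraph edge).IsAcyclic

namespace TreeJust
variable {JF : JFrame F}

def LocallyComplete (T : TreeJust JF) : Prop :=
  ∀ n, T.label n ∈ JF.defined → ∃ m, T.edge n m

def Connected (T : TreeJust JF) : Prop :=
  ∀ a b : T.Node, Relation.ReflTransGen (fun u v => T.edge u v ∨ T.edge v u) a b

def IsRoot (T : TreeJust JF) (x : F) : Prop :=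
  ∃ n, T.label n = x ∧ ∀ m, Relation.ReflTransGen T.edge n m

def IsBranchFrom (T : TreeJust JF) (x : F) : Branch F → Prop
  | .fin l => ∃ ns : List T.Node, List.Chain' T.edge ns ∧ ns.map T.label = l ∧
      l.head? = some x ∧ (∀ nl, ns.getLast? = some nl → ∀ m, ¬ T.edge nl m)
  | .inf s => ∃ ns : ℕ → T.Node, (∀ n, T.edge (ns n) (ns (n+1))) ∧
      (∀ n, T.label (ns n) = s n) ∧ s 0 = x

noncomputable def val (T : TreeJust JF) (B : Branch F → F) (x : F) (I : Interp JF) : TV :=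
  ⨅ b ∈ {b | T.IsBranchFrom x b}, I.val (B b)

end TreeJust

/-- Graph-like supported value. -/
noncomputable def SVg (JF : JFrame F) (B : Branch F → F) (x : F) (I : Interp JF) : TV :=
  if x ∈ JF.defined then
    ⨆ J ∈ {J : GraphJust JF | J.LocallyComplete ∧ x ∈ J.nodes}, J.val B x I
  else I.val x

/-- Tree-like supported value. -/
noncomputable def SVt (JF : JFrame F) (B : Branch F → F) (x : F) (I : Interp JF) : TV :=
  if x ∈ JF.defined then
    ⨆ (T : TreeJust JF) (_ : T.LocallyComplete ∧ ∃ n, T.label n = x), T.val B x I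
  else I.val x

/-! ### Games -/

/-- A game graph: states owned by player 𝐓 (`T`) or by player 𝐅 (`Tᶜ`), edges `E`. -/
structure GameGraph (S : Type) where
  T : Set S
  E : Set (S × S)

namespace GameGraph
variable {S : Type}

def IsPath (G : GameGraph S) (p : List S) : Prop :=
  p ≠ [] ∧ List.Chain' (fun a b => (a, b) ∈ G.E) p

end GameGraph

/-- A general strategy for the player owning the states in `P`. -/
structure GenStrat {S : Type} (G : GameGraph S) (P : Set S) where
  next : List S → S
  next_ok : ∀ p s, G.IsPath p → p.getLast? = some s → s ∈ P →
      (∃ t2, (s, t2) ∈ G.E) → (s, next p) ∈ G.E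

/-- A positional strategy for the player owning the states in `P`. -/
structure PosStrat {S : Type} (G : GameGraph S) (P : Set S) where
  move : S → S
  move_ok : ∀ s ∈ P, (∃ t2, (s, t2) ∈ G.E) → (s, move s) ∈ G.E

/-- The embedding of positional strategies into general strategies. -/
noncomputable def PosStrat.toGen {S : Type} [Nonempty S] {G : GameGraph S} {P : Set S}
    (σ : PosStrat G P) : GenStrat G P where
  next p := σ.move (p.getLastD (Classical.arbitrary S))
  next_ok := by
    intro p s _ hlast hsP hout
    have h : p.getLastD (Classical.arbitrary S) = s := by
      rw [List.getLastD_eq_getLast?, hlast]; rfl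
    show (s, σ.move (p.getLastD (Classical.arbitrary S))) ∈ G.E
    rw [h]; exact σ.move_ok s hsP hout

/-- The finite prefixes of the unique play from `x` consistent with both strategies. -/
noncomputable def GameGraph.playPrefix {S : Type} (G : GameGraph S)
    (σ : GenStrat G G.T) (τ : GenStrat G G.Tᶜ) (x : S) : ℕ → List S
  | 0 => [x]
  | n + 1 =>
    let p := G.playPrefix σ τ x n
    match p.getLast? with
    | none => p
    | some s =>
      if (∃ t2, (s, t2) ∈ G.E) then
        p ++ [if s ∈ G.T then σ.next p else τ.next p]
      else p

/-- The trace of the play from `x`: the state at each time step, if any. -/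
noncomputable def GameGraph.playTrace {S : Type} (G : GameGraph S)
    (σ : GenStrat G G.T) (τ : GenStrat G G.Tᶜ) (x : S) : ℕ → Option S :=
  fun n => (G.playPrefix σ τ x n)[n]?

/-- Value of the play from `x`, for a valuation `v` of plays (given by traces). -/
noncomputable def GameGraph.uval {S V : Type} [CompleteLinearOrder V] (G : GameGraph S)
    (v : (ℕ → Option S) → V) (x : S) (σ : GenStrat G G.T) (τ : GenStrat G G.Tᶜ) : V :=
  v (G.playTrace σ τ x)

/-- Optimal pair of strategies. -/
def GameGraph.OptimalPair {S V : Type} [CompleteLinearOrder V] (G : GameGraph S)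
    (v : (ℕ → Option S) → V) (σs : GenStrat G G.T) (τs : GenStrat G G.Tᶜ) : Prop :=
  ∀ s : S, (∀ σ, G.uval v s σ τs ≤ G.uval v s σs τs) ∧
    (∀ τ, G.uval v s σs τs ≤ G.uval v s σs τ)

/-! ### The justification game -/

/-- Rule symbols `r_{x ← A}`. -/
def RuleSym (JF : JFrame F) : Type := {r : F × Set F // r ∈ JF.rules}

/-- States of the justification game: facts (owned by 𝐓) and rule symbols (owned by 𝐅). -/
abbrev GState (JF : JFrame F) : Type := F ⊕ RuleSym JF

instance (JF : JFrame F) : Nonempty (GState JF) := ⟨Sum.inl JF.tLit⟩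

/-- The game graph `G_JF` associated to a justification frame. -/
def JFrame.game (JF : JFrame F) : GameGraph (GState JF) where
  T := Set.range Sum.inl
  E := {e | (∃ (x : F) (r : RuleSym JF), e = (Sum.inl x, Sum.inr r) ∧ r.1.1 = x) ∨
            (∃ (r : RuleSym JF) (y : F), e = (Sum.inr r, Sum.inl y) ∧ y ∈ r.1.2)}

/-- The `JF`-branch obtained from the play from `s` by filtering out rule symbols. -/
noncomputable def JFrame.playBranch (JF : JFrame F)
    (σ : GenStrat JF.game JF.game.T) (τ : GenStrat JF.game JF.game.Tᶜ)
    (s : GState JF) : Branch F :=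
  if h : ∃ n, JF.game.playPrefix σ τ s (n+1) = JF.game.playPrefix σ τ s n then
    .fin ((JF.game.playPrefix σ τ s (Nat.find h)).filterMap Sum.getLeft?)
  else
    .inf (fun k => ((JF.game.playPrefix σ τ s (2*k+2)).filterMap Sum.getLeft?).getD k JF.tLit)

/-- `u(s, σ, τ) = I(B(b_{play(s,σ,τ)}))`. -/
noncomputable def JFrame.uS (JF : JFrame F) (B : Branch F → F) (I : Interp JF)
    (s : GState JF) (σ : GenStrat JF.game JF.game.T) (τ : GenStrat JF.game JF.game.Tᶜ) : TV :=
  I.val (B (JF.playBranch σ τ s))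

/-- Optimal pair of strategies in the justification game `G_{JS,I}`. -/
def JFrame.OptPair (JF : JFrame F) (B : Branch F → F) (I : Interp JF)
    (σs : GenStrat JF.game JF.game.T) (τs : GenStrat JF.game JF.game.Tᶜ) : Prop :=
  ∀ s : GState JF, (∀ σ, JF.uS B I s σ τs ≤ JF.uS B I s σs τs) ∧
    (∀ τ, JF.uS B I s σs τs ≤ JF.uS B I s σs τ)

/-! ### Play graphs of positional strategies, filtered -/

/-- Steps consistent with a positional strategy for 𝐓. -/
def JFrame.stepT (JF : JFrame F) (σ : PosStrat JF.game JF.game.T)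
    (a b : GState JF) : Prop :=
  (a, b) ∈ JF.game.E ∧ (a ∈ JF.game.T → b = σ.move a)

def JFrame.reachT (JF : JFrame F) (σ : PosStrat JF.game JF.game.T) (x : F) :
    Set (GState JF) :=
  {s | Relation.ReflTransGen (JF.stepT σ) (Sum.inl x) s}

/-- Nodes of the play graph of `σ` at `x` with rule symbols filtered out. -/
def JFrame.filtNodesT (JF : JFrame F) (σ : PosStrat JF.game JF.game.T) (x : F) : Set F :=
  {y | Sum.inl y ∈ JF.reachT σ x}

/-- Edges of the play graph of `σ` at `x` with rule symbols filtered out. -/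
def JFrame.filtEdgesT (JF : JFrame F) (σ : PosStrat JF.game JF.game.T) (x : F) :
    Set (F × F) :=
  {e | ∃ r : RuleSym JF, Sum.inl e.1 ∈ JF.reachT σ x ∧
      JF.stepT σ (Sum.inl e.1) (Sum.inr r) ∧ JF.stepT σ (Sum.inr r) (Sum.inl e.2)}

/-- Steps consistent with a positional strategy for 𝐅. -/
def JFrame.stepF (JF : JFrame F) (τ : PosStrat JF.game JF.game.Tᶜ)
    (a b : GState JF) : Prop :=
  (a, b) ∈ JF.game.E ∧ (a ∈ JF.game.Tᶜ → b = τ.move a)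

def JFrame.reachF (JF : JFrame F) (τ : PosStrat JF.game JF.game.Tᶜ) (x : F) :
    Set (GState JF) :=
  {s | Relation.ReflTransGen (JF.stepF τ) (Sum.inl x) s}

/-- Nodes of the play graph of `τ` at `x`, rule symbols filtered out, labels negated. -/
def JFrame.filtNodesF (JF : JFrame F) (τ : PosStrat JF.game JF.game.Tᶜ) (x : F) : Set F :=
  {w | ∃ y : F, w = JF.compl y ∧ Sum.inl y ∈ JF.reachF τ x}

/-- Edges of the play graph of `τ` at `x`, rule symbols filtered out, labels negated. -/
def JFrame.filtEdgesF (JF : JFrame F) (τ : PosStrat JF.game JF.game.Tᶜ) (x : F) :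
    Set (F × F) :=
  {e | ∃ (y z : F) (r : RuleSym JF), e = (JF.compl y, JF.compl z) ∧
      Sum.inl y ∈ JF.reachF τ x ∧
      JF.stepF τ (Sum.inl y) (Sum.inr r) ∧ JF.stepF τ (Sum.inr r) (Sum.inl z)}

/-! ### Complementation -/

/-- A selection function for `x` chooses an element from the body of each rule of `x`. -/
def JFrame.SelectionFn (JF : JFrame F) (x : F) : Type :=
  {s : {A : Set F // (x, A) ∈ JF.rules} → F // ∀ A, s A ∈ A.1}

/-- `JF` is complementary: fixed under complementation, i.e. for each defined `x` and
selection function `s` for `x`, the rule `~x ← ~Im(s)` belongs to the rules. -/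
def JFrame.Complementary (JF : JFrame F) : Prop :=
  ∀ x ∈ JF.defined, ∀ s : JF.SelectionFn x,
    (JF.compl x, JF.compl '' Set.range s.1) ∈ JF.rules

/-! ### Monotone, selective, transitive branch evaluations -/

/-- Monotone branch evaluation. -/
def JFrame.MonotoneBE (JF : JFrame F) (B : Branch F → F) : Prop :=
  ∀ (I : Interp JF) (x : F), x ∈ JF.defined →
    ∀ b1 b2 : Branch F, JF.IsBranch b1 → JF.IsBranch b2 →
      b1.startsAt x → b2.startsAt x →
      ∀ p : List F, (∀ a ∈ p, a ∈ JF.defined) →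
        I.val (B b1) ≤ I.val (B b2) →
        I.val (B (Branch.prepend p b1)) ≤ I.val (B (Branch.prepend p b2))

/-- Transitive branch evaluation: dropping the first element of a branch with at
least three elements does not change its value. -/
def JFrame.TransitiveBE (JF : JFrame F) (B : Branch F → F) : Prop :=
  ∀ (x0 : F) (b : Branch F), JF.IsBranch b → B (Branch.prepend [x0] b) = B b

/-- A finite loop starting in `x`. -/
def JFrame.IsLoopAt (JF : JFrame F) (x : F) (q : List F) : Prop :=
  q.head? = some x ∧ ∀ a ∈ q, a ∈ JF.defined

/-- Finite iterations of loops from `L`. -/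
def FinIter (L : Set (List F)) : Set (List F) :=
  {w | ∃ ls : List (List F), (∀ l ∈ ls, l ∈ L) ∧ w = ls.flatten}

/-- `s` is the concatenation of the infinite sequence of lists `f`. -/
def IsConcat (f : ℕ → List F) (s : ℕ → F) : Prop :=
  ∃ c : ℕ → ℕ, c 0 = 0 ∧ (∀ i, c (i+1) = c i + (f i).length) ∧
    ∀ i k (h : k < (f i).length), s (c i + k) = (f i).get ⟨k, h⟩

/-- `L^ω`: infinite iterations of loops from `L`, as branches. -/
def InfIter (L : Set (List F)) : Set (Branch F) :=
  {b | ∃ (f : ℕ → List F) (s : ℕ → F), (∀ i, f i ∈ L) ∧ (∀ i, f i ≠ []) ∧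
      IsConcat f s ∧ b = .inf s}

/-- `p L* K`. -/
def StarKSet (p : List F) (L : Set (List F)) (K : Set (Branch F)) : Set (Branch F) :=
  {b | ∃ w ∈ FinIter L, ∃ k ∈ K, b = Branch.prepend (p ++ w) k}

/-- `p L^ω`. -/
def OmegaSet (p : List F) (L : Set (List F)) : Set (Branch F) :=
  {b | ∃ b0 ∈ InfIter L, b = Branch.prepend p b0}

/-- `p K`. -/
def PrepSet (p : List F) (K : Set (Branch F)) : Set (Branch F) :=
  (Branch.prepend p) '' K

/-- Selective branch evaluation with respect to `I`. -/
def JFrame.SelectiveBE (JF : JFrame F) (B : Branch F → F) (I : Interp JF) : Prop :=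
  ∀ p : List F, (∀ a ∈ p, a ∈ JF.defined) →
  ∀ x ∈ JF.defined,
  ∀ M N : Set (List F), (∀ q ∈ M, JF.IsLoopAt x q) → (∀ q ∈ N, JF.IsLoopAt x q) →
  ∀ K : Set (Branch F), (∀ b ∈ K, JF.IsBranch b ∧ b.startsAt x) →
  ∀ b ∈ StarKSet p (M ∪ N) K ∪ OmegaSet p (M ∪ N),
    (∃ bs ∈ OmegaSet p M ∪ OmegaSet p N ∪ PrepSet p K, I.val (B bs) ≤ I.val (B b)) ∧
    (∃ bu ∈ OmegaSet p M ∪ OmegaSet p N ∪ PrepSet p K, I.val (B b) ≤ I.val (B bu))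

/-! ### Concrete branch evaluations -/

/-- Supported (completion) branch evaluation: maps a branch to its second element. -/
def Bsp (JF : JFrame F) : Branch F → F
  | .fin l => l[1]?.getD JF.uLit
  | .inf s => s 1

/-- Kripke-Kleene branch evaluation. -/
def Bkk (JF : JFrame F) : Branch F → F
  | .fin l => l.getLastD JF.uLit
  | .inf _ => JF.uLit

/-- A sign function; `true` means positive, `false` negative. -/
structure SignFn (JF : JFrame F) where
  sgn : F → Bool
  sgn_compl : ∀ x ∈ JF.defined, sgn (JF.compl x) ≠ sgn x

/-- Well-founded branch evaluation. -/
noncomputable def Bwf (JF : JFrame F) (sg : SignFn JF) : Branch F → F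
  | .fin l => l.getLastD JF.uLit
  | .inf s =>
    if ∃ n, ∀ i ≥ n, sg.sgn (s i) = false then JF.tLit
    else if ∃ n, ∀ i ≥ n, sg.sgn (s i) = true then JF.fLit
    else JF.uLit

/-- Stable branch evaluation. -/
noncomputable def Bst (JF : JFrame F) (sg : SignFn JF) : Branch F → F
  | .fin l =>
    match l with
    | [] => JF.uLit
    | x0 :: rest =>
      match rest.find? (fun y => sg.sgn y != sg.sgn x0) with
      | some y => y
      | none => Bwf JF sg (.fin (x0 :: rest))
  | .inf s =>
    if h : ∃ i, sg.sgn (s i) ≠ sg.sgn (s 0) then s (Nat.find h)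
    else Bwf JF sg (.inf s)

end JT

namespace JT

/-- Auxiliary: the subgraph of `J` reachable from `x`. -/
def GraphJust.reachSub {F : Type} {JF : JFrame F} (J : GraphJust JF) (x : F)
    (hxn : x ∈ J.nodes) : GraphJust JF where
  nodes := {y | Relation.ReflTransGen (fun a b => (a, b) ∈ J.edges) x y}
  edges := {e | e ∈ J.edges ∧
    e.1 ∈ {y | Relation.ReflTransGen (fun a b => (a, b) ∈ J.edges) x y}}
  edges_mem := fun e he => ⟨he.2, he.2.tail he.1⟩
  rule_of_internal := by
    intro y hy hout
    obtain ⟨z, hz⟩ := hout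
    have hyn : y ∈ J.nodes := by
      induction hy with
      | refl => exact hxn
      | tail _ h2 _ => exact (J.edges_mem _ h2).2
    have hset : {z | (y, z) ∈ {e : F × F | e ∈ J.edges ∧
        e.1 ∈ {y | Relation.ReflTransGen (fun a b => (a, b) ∈ J.edges) x y}}} =
        {z | (y, z) ∈ J.edges} := by
      ext w
      simp only [Set.mem_setOf_eq]
      exact ⟨fun h => h.1, fun h => ⟨h, hy⟩⟩
    rw [hset]
    exact J.rule_of_internal y hyn ⟨z, hz.1⟩

theorem stmt0 {F : Type} (JF : JFrame F) (B : Branch F → F)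
    (J : GraphJust JF) (hJ : J.LocallyComplete)
    (x : F) (hx : x ∈ JF.defined) (hxn : x ∈ J.nodes) (hint : ∃ y, (x, y) ∈ J.edges) :
    ∃ J' : GraphJust JF, J'.LocallyComplete ∧ J'.Connected ∧ J'.IsRoot x ∧
      ∀ I : Interp JF, J.val B x I ≤ J'.val B x I := by
  classical
  set E : F → F → Prop := fun a b => (a, b) ∈ J.edges with hE
  set Nd : Set F := {y | Relation.ReflTransGen E x y} with hNd
  have hxNd : x ∈ Nd := Relation.ReflTransGen.refl
  have hsub : ∀ y ∈ Nd, y ∈ J.nodes := by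
    intro y hy
    induction hy with
    | refl => exact hxn
    | tail _ h2 _ => exact (J.edges_mem _ h2).2
  have hstep : ∀ a b, a ∈ Nd → E a b → b ∈ Nd := fun a b ha hab => ha.tail hab
  refine ⟨J.reachSub x hxn, ?_, ?_, ?_, ?_⟩
  · -- locally complete
    intro y hy hyd
    obtain ⟨z, hz⟩ := hJ y (hsub y hy) hyd
    exact ⟨z, hz, hy⟩
  · -- connected
    have hlift : ∀ y ∈ Nd,
        Relation.ReflTransGen (fun a b => (a, b) ∈ (J.reachSub x hxn).edges) x y := by
      intro y hy
      induction hy with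
      | refl => exact Relation.ReflTransGen.refl
      | tail h1 h2 ih => exact ih.tail ⟨h2, h1⟩
    intro a ha b hb
    have hsymm : Symmetric (fun u v : F =>
        (u, v) ∈ (J.reachSub x hxn).edges ∨ (v, u) ∈ (J.reachSub x hxn).edges) :=
      fun _ _ h => h.symm
    have hxa : Relation.ReflTransGen (fun u v : F =>
        (u, v) ∈ (J.reachSub x hxn).edges ∨ (v, u) ∈ (J.reachSub x hxn).edges) x a :=
      Relation.ReflTransGen.mono (fun u v h => Or.inl h) _ _ (hlift a ha)
    have hxb : Relation.ReflTransGen (fun u v : F =>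
        (u, v) ∈ (J.reachSub x hxn).edges ∨ (v, u) ∈ (J.reachSub x hxn).edges) x b :=
      Relation.ReflTransGen.mono (fun u v h => Or.inl h) _ _ (hlift b hb)
    exact ((@Relation.ReflTransGen.symmetric _ _ ⟨hsymm⟩).symm _ _ hxa).trans hxb
  · -- root
    refine ⟨hxNd, ?_⟩
    intro y hy
    induction hy with
    | refl => exact Relation.ReflTransGen.refl
    | tail h1 h2 ih => exact ih.tail ⟨h2, h1⟩
  · -- values
    intro I
    have key : ∀ (l : List F), ∀ x0 ∈ Nd, l.head? = some x0 →
        List.Chain' E l → (∀ a ∈ l, a ∈ Nd) ∧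
        List.Chain' (fun a b => (a, b) ∈ (J.reachSub x hxn).edges) l := by
      intro l
      induction l with
      | nil => intro x0 _ h; simp at h
      | cons a t ih =>
        intro x0 hx0 hh hc
        have hax : a = x0 := by simpa using hh
        subst hax
        cases t with
        | nil =>
          refine ⟨?_, List.isChain_singleton a⟩
          intro c hcmem
          have : c = a := by simpa using hcmem
          subst this; exact hx0
        | cons b t2 =>
          have hab : E a b := (List.isChain_cons_cons.mp hc).1
          have hct : List.Chain' E (b :: t2) := (List.isChain_cons_cons.mp hc).2
          have hb : b ∈ Nd := hstep _ _ hx0 hab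
          obtain ⟨hmem, hch⟩ := ih b hb rfl hct
          refine ⟨?_, List.isChain_cons_cons.mpr ⟨⟨hab, hx0⟩, hch⟩⟩
          intro c hcmem
          rcases List.mem_cons.mp hcmem with rfl | h
          · exact hx0
          · exact hmem c h
    have hbr : ∀ b : Branch F,
        (J.reachSub x hxn).IsBranchFrom x b ↔ J.IsBranchFrom x b := by
      intro b
      cases b with
      | fin l =>
        constructor
        · rintro ⟨h1, h2, h3, h4⟩
          refine ⟨h1, fun a ha => hsub a (h2 a ha), h3.imp (fun {a b} h => h.1), ?_⟩
          intro e he y hey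
          have hel : e ∈ l := by
            obtain ⟨hne, he'⟩ := List.mem_getLast?_eq_getLast (show e ∈ l.getLast? from he)
            rw [he']; exact List.getLast_mem hne
          have heNd : e ∈ Nd := h2 e hel
          exact h4 e he y ⟨hey, heNd⟩
        · rintro ⟨h1, h2, h3, h4⟩
          obtain ⟨hmem, hch⟩ := key l x hxNd h1 h3
          refine ⟨h1, hmem, hch, ?_⟩
          intro e he y hey
          exact h4 e he y hey.1
      | inf s =>
        constructor
        · rintro ⟨h1, h2, h3⟩
          exact ⟨h1, fun n => hsub _ (h2 n), fun n => (h3 n).1⟩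
        · rintro ⟨h1, h2, h3⟩
          have hmem : ∀ n, s n ∈ Nd := by
            intro n
            induction n with
            | zero => rw [h1]; exact hxNd
            | succ k ihk => exact hstep _ _ ihk (h3 k)
          exact ⟨h1, hmem, fun n => ⟨h3 n, hmem n⟩⟩
    apply le_of_eq
    unfold GraphJust.val
    have hset : {b | J.IsBranchFrom x b} = {b | (J.reachSub x hxn).IsBranchFrom x b} := by
      ext b
      simp only [Set.mem_setOf_eq]
      exact (hbr b).symm
    rw [hset]

end JT
end

section
/- Let G be a game graph arising from a justification frame JF: the player T owns the facts, player F owns the rule symbols, with edges from each defined fact x to each rule symbol r_{x←A} and from r_{x←A} to each y ∈ A. Then for any positional strategy σ for T and any defined fact x, the play graph of σ in x with rule symbols filtered out is a connected, locally complete graph-like justification with x as a root in JF. -/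
namespace JT

section Aux
variable {F : Type} {JF : JFrame F}

lemma edge_inl_inr {a : F} {r : RuleSym JF} :
    (Sum.inl a, Sum.inr r) ∈ JF.game.E ↔ r.1.1 = a := by
  constructor
  · rintro (⟨x, r', h, hr⟩ | ⟨r', y, h, _⟩)
    · simp only [Prod.mk.injEq, Sum.inl.injEq, Sum.inr.injEq] at h
      obtain ⟨h1, h2⟩ := h
      subst h1; subst h2; exact hr
    · simp [Prod.mk.injEq] at h
  · intro h; exact Or.inl ⟨a, r, rfl, h⟩

lemma edge_inr_inl {r : RuleSym JF} {y : F} :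
    (Sum.inr r, Sum.inl y) ∈ JF.game.E ↔ y ∈ r.1.2 := by
  constructor
  · rintro (⟨x, r', h, _⟩ | ⟨r', z, h, hz⟩)
    · simp [Prod.mk.injEq] at h
    · simp only [Prod.mk.injEq, Sum.inr.injEq, Sum.inl.injEq] at h
      obtain ⟨ha, hb⟩ := h
      subst ha; subst hb; exact hz
  · intro h; exact Or.inr ⟨r, y, rfl, h⟩

lemma not_edge_inl_inl {a b : F} : (Sum.inl a, Sum.inl b) ∉ (JF.game).E := by
  rintro (⟨x, r, h, _⟩ | ⟨r, z, h, _⟩) <;> simp [Prod.mk.injEq] at h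

lemma not_edge_inr_inr {r s : RuleSym JF} : (Sum.inr r, Sum.inr s) ∉ (JF.game).E := by
  rintro (⟨x, r', h, _⟩ | ⟨r', z, h, _⟩) <;> simp [Prod.mk.injEq] at h

lemma inl_mem_T (a : F) : (Sum.inl a : GState JF) ∈ JF.game.T := ⟨a, rfl⟩

lemma inr_not_mem_T (r : RuleSym JF) : (Sum.inr r : GState JF) ∉ JF.game.T := by
  rintro ⟨a, h⟩; simp at h

/-- For a defined fact `y`, the strategy's move from `inl y` is a rule symbol of `y`. -/
lemma move_spec (σ : PosStrat JF.game JF.game.T) {y : F} (hy : y ∈ JF.defined) :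
    ∃ r : RuleSym JF, σ.move (Sum.inl y) = Sum.inr r ∧ r.1.1 = y := by
  obtain ⟨A, hA⟩ := JF.rules_ex y hy
  have hout : ∃ t2, ((Sum.inl y : GState JF), t2) ∈ JF.game.E :=
    ⟨Sum.inr ⟨(y, A), hA⟩, edge_inl_inr.2 rfl⟩
  have hm := σ.move_ok _ (inl_mem_T y) hout
  rcases h : σ.move (Sum.inl y) with a | r
  · rw [h] at hm; exact absurd hm not_edge_inl_inl
  · rw [h] at hm; exact ⟨r, rfl, edge_inl_inr.1 hm⟩

end Aux

theorem stmt2 {F : Type} (JF : JFrame F) (σ : PosStrat JF.game JF.game.T)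
    (x : F) (hx : x ∈ JF.defined) :
    ∃ J : GraphJust JF, J.nodes = JF.filtNodesT σ x ∧ J.edges = JF.filtEdgesT σ x ∧
      J.LocallyComplete ∧ J.Connected ∧ J.IsRoot x := by
  -- basic facts about filtered edges
  have hedge_mem : ∀ e ∈ JF.filtEdgesT σ x,
      e.1 ∈ JF.filtNodesT σ x ∧ e.2 ∈ JF.filtNodesT σ x := by
    rintro ⟨a, b⟩ ⟨r, hreach, h1, h2⟩
    refine ⟨hreach, ?_⟩
    exact Relation.ReflTransGen.tail (Relation.ReflTransGen.tail hreach h1) h2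
  -- the unique rule symbol used from a node with an outgoing edge
  have hrule : ∀ a ∈ JF.filtNodesT σ x, (∃ b, (a, b) ∈ JF.filtEdgesT σ x) →
      (a, {y | (a, y) ∈ JF.filtEdgesT σ x}) ∈ JF.rules := by
    rintro a _ ⟨b, r0, hreach, hs1, hs2⟩
    have hmove : Sum.inr r0 = σ.move (Sum.inl a) := hs1.2 (inl_mem_T a)
    have hr0 : r0.1.1 = a := edge_inl_inr.1 hs1.1
    have hset : {y | (a, y) ∈ JF.filtEdgesT σ x} = r0.1.2 := by
      ext y
      constructor
      · rintro ⟨r, _, h1, h2⟩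
        have : Sum.inr r = σ.move (Sum.inl a) := h1.2 (inl_mem_T a)
        have hrr : r = r0 := by
          have := this.trans hmove.symm
          exact Sum.inr.inj this
        exact hrr ▸ edge_inr_inl.1 h2.1
      · intro hy
        exact ⟨r0, hreach, hs1, edge_inr_inl.2 hy,
          fun h => absurd h (inr_not_mem_T r0)⟩
    rw [hset]
    have : r0.1 = (a, r0.1.2) := by
      ext : 1
      · exact hr0
      · rfl
    exact this ▸ r0.2
  refine ⟨⟨JF.filtNodesT σ x, JF.filtEdgesT σ x, hedge_mem, hrule⟩, rfl, rfl, ?_, ?_, ?_⟩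
  · -- locally complete
    intro y hy hyd
    obtain ⟨r, hmv, hr⟩ := move_spec σ hyd
    have hstep1 : JF.stepT σ (Sum.inl y) (Sum.inr r) :=
      ⟨edge_inl_inr.2 hr, fun _ => hmv.symm⟩
    obtain ⟨z, hz⟩ := JF.rules_body_ne r.1 r.2
    exact ⟨z, r, hy, hstep1, ⟨edge_inr_inl.2 hz, fun h => absurd h (inr_not_mem_T r)⟩⟩
  · -- connected: both reachable from root via directed edges
    intro a ha b hb
    have key : ∀ s, Relation.ReflTransGen (JF.stepT σ) (Sum.inl x) s →
        (∀ y, s = Sum.inl y →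
          Relation.ReflTransGen (fun u v => (u, v) ∈ JF.filtEdgesT σ x) x y) ∧
        (∀ r : RuleSym JF, s = Sum.inr r → ∃ y',
          Relation.ReflTransGen (fun u v => (u, v) ∈ JF.filtEdgesT σ x) x y' ∧
          Sum.inl y' ∈ JF.reachT σ x ∧ JF.stepT σ (Sum.inl y') (Sum.inr r)) := by
      intro s hs
      induction hs with
      | refl =>
        refine ⟨fun y hy => ?_, fun r hr => by simp at hr⟩
        cases Sum.inl.inj hy; exact Relation.ReflTransGen.refl
      | tail h1 h2 ih =>
        rename_i b' c'
        rcases b' with yb | rb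
        · -- step from a fact: target is a rule symbol
          rcases c' with yc | rc
          · exact absurd h2.1 not_edge_inl_inl
          · refine ⟨fun y hy => by simp at hy, fun r hr => ?_⟩
            cases Sum.inr.inj hr
            exact ⟨yb, ih.1 yb rfl, h1, h2⟩
        · -- step from a rule symbol: target is a fact
          rcases c' with yc | rc
          · obtain ⟨y', hy'rtg, hy'reach, hy'step⟩ := ih.2 rb rfl
            refine ⟨fun y hy => ?_, fun r hr => by simp at hr⟩
            cases Sum.inl.inj hy
            exact Relation.ReflTransGen.tail hy'rtg ⟨rb, hy'reach, hy'step, h2⟩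
          · exact absurd h2.1 not_edge_inr_inr
    have hsym : Symmetric (fun u v : F => (u, v) ∈ JF.filtEdgesT σ x ∨
        (v, u) ∈ JF.filtEdgesT σ x) := fun _ _ h => h.symm
    have hmono : ∀ {u v : F},
        Relation.ReflTransGen (fun u v => (u, v) ∈ JF.filtEdgesT σ x) u v →
        Relation.ReflTransGen (fun u v => (u, v) ∈ JF.filtEdgesT σ x ∨
          (v, u) ∈ JF.filtEdgesT σ x) u v := by
      intro u v h
      exact Relation.ReflTransGen.mono (fun _ _ h => Or.inl h) _ _ h
    have hxa := hmono ((key _ ha).1 a rfl)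
    have hxb := hmono ((key _ hb).1 b rfl)
    exact Relation.ReflTransGen.trans ((@Relation.ReflTransGen.stdSymm _ _ ⟨fun a b h => hsym h⟩).symm _ _ hxa) hxb
  · -- root
    refine ⟨Relation.ReflTransGen.refl, ?_⟩
    intro y hy
    have key : ∀ s, Relation.ReflTransGen (JF.stepT σ) (Sum.inl x) s →
        (∀ z, s = Sum.inl z →
          Relation.ReflTransGen (fun u v => (u, v) ∈ JF.filtEdgesT σ x) x z) ∧
        (∀ r : RuleSym JF, s = Sum.inr r → ∃ y',
          Relation.ReflTransGen (fun u v => (u, v) ∈ JF.filtEdgesT σ x) x y' ∧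
          Sum.inl y' ∈ JF.reachT σ x ∧ JF.stepT σ (Sum.inl y') (Sum.inr r)) := by
      intro s hs
      induction hs with
      | refl =>
        refine ⟨fun z hz => ?_, fun r hr => by simp at hr⟩
        cases Sum.inl.inj hz; exact Relation.ReflTransGen.refl
      | tail h1 h2 ih =>
        rename_i b' c'
        rcases b' with yb | rb
        · rcases c' with yc | rc
          · exact absurd h2.1 not_edge_inl_inl
          · refine ⟨fun z hz => by simp at hz, fun r hr => ?_⟩
            cases Sum.inr.inj hr
            exact ⟨yb, ih.1 yb rfl, h1, h2⟩
        · rcases c' with yc | rc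
          · obtain ⟨y', hy'rtg, hy'reach, hy'step⟩ := ih.2 rb rfl
            refine ⟨fun z hz => ?_, fun r hr => by simp at hr⟩
            cases Sum.inl.inj hz
            exact Relation.ReflTransGen.tail hy'rtg ⟨rb, hy'reach, hy'step, h2⟩
          · exact absurd h2.1 not_edge_inr_inr
    exact (key _ hy).1 y rfl

end JT
end

section
/- Every connected, locally complete graph-like justification J with root x in a justification frame JF equals J_σ(x) for some positional strategy σ for player T in the game graph G_JF, where J_σ(x) denotes the play graph of σ at x with rule symbols filtered out. -/
namespace JT

variable {F : Type}

attribute [local instance] Classical.propDecidable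

/-- The strategy selecting, at each fact `y` internal to `J`, the rule given by the
out-edges of `y` in `J`; arbitrary elsewhere. -/
noncomputable def mkStratMove (JF : JFrame F) (J : GraphJust JF) (s : GState JF) :
    GState JF :=
  match s with
  | Sum.inl y =>
    if h : y ∈ J.nodes ∧ ∃ z, (y, z) ∈ J.edges then
      Sum.inr ⟨(y, {z | (y, z) ∈ J.edges}), J.rule_of_internal y h.1 h.2⟩
    else if h2 : ∃ t, ((Sum.inl y : GState JF), t) ∈ JF.game.E then h2.choose
    else Sum.inl y
  | Sum.inr r => Sum.inr r

lemma mkStratMove_eq (JF : JFrame F) (J : GraphJust JF) {y : F}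
    (h1 : y ∈ J.nodes) (h2 : ∃ z, (y, z) ∈ J.edges) :
    mkStratMove JF J (Sum.inl y) =
      Sum.inr ⟨(y, {z | (y, z) ∈ J.edges}), J.rule_of_internal y h1 h2⟩ := by
  show (if h : y ∈ J.nodes ∧ ∃ z, (y, z) ∈ J.edges then
      (Sum.inr ⟨(y, {z | (y, z) ∈ J.edges}), J.rule_of_internal y h.1 h.2⟩ : GState JF)
    else if h2 : ∃ t, ((Sum.inl y : GState JF), t) ∈ JF.game.E then h2.choose
    else Sum.inl y) = _
  rw [dif_pos ⟨h1, h2⟩]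

noncomputable def mkStrat (JF : JFrame F) (J : GraphJust JF) :
    PosStrat JF.game JF.game.T where
  move := mkStratMove JF J
  move_ok := by
    rintro s ⟨y, rfl⟩ hout
    show ((Sum.inl y : GState JF),
      (if h : y ∈ J.nodes ∧ ∃ z, (y, z) ∈ J.edges then
        (Sum.inr ⟨(y, {z | (y, z) ∈ J.edges}), J.rule_of_internal y h.1 h.2⟩ : GState JF)
      else if h2 : ∃ t, ((Sum.inl y : GState JF), t) ∈ JF.game.E then h2.choose
      else Sum.inl y)) ∈ JF.game.E
    by_cases h : y ∈ J.nodes ∧ ∃ z, (y, z) ∈ J.edges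
    · rw [dif_pos h]
      exact Or.inl ⟨y, _, rfl, rfl⟩
    · rw [dif_neg h, dif_pos hout]
      exact hout.choose_spec

lemma mkStrat_move (JF : JFrame F) (J : GraphJust JF) {y : F}
    (h1 : y ∈ J.nodes) (h2 : ∃ z, (y, z) ∈ J.edges) :
    (mkStrat JF J).move (Sum.inl y) =
      Sum.inr ⟨(y, {z | (y, z) ∈ J.edges}), J.rule_of_internal y h1 h2⟩ :=
  mkStratMove_eq JF J h1 h2

lemma inr_not_T (JF : JFrame F) (r : RuleSym JF) : (Sum.inr r : GState JF) ∉ JF.game.T := by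
  rintro ⟨w, hw⟩; exact absurd hw (by simp)

/-- Invariant: along plays consistent with `mkStrat`, facts are nodes of `J` and rule
symbols are the canonical rules of nodes of `J`. -/
lemma reach_inv (JF : JFrame F) (J : GraphJust JF) (hlc : J.LocallyComplete)
    {x : F} (hx : x ∈ J.nodes) :
    ∀ s ∈ JF.reachT (mkStrat JF J) x,
      (∀ y, s = Sum.inl y → y ∈ J.nodes) ∧
      (∀ r : RuleSym JF, s = Sum.inr r →
        r.1.1 ∈ J.nodes ∧ r.1.2 = {z | (r.1.1, z) ∈ J.edges}) := by
  intro s hs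
  induction hs with
  | refl =>
      refine ⟨fun y hy => ?_, fun r hr => nomatch hr⟩
      cases Sum.inl.inj hy; exact hx
  | tail hab hstep ih =>
      obtain ⟨hE, hmove⟩ := hstep
      rcases hE with ⟨y, r, heq, hhead⟩ | ⟨r, y, heq, hbody⟩
      · -- b = inl y, c = inr r
        injection heq with h1 h2
        subst h1; subst h2
        have hyJ : y ∈ J.nodes := (ih.1 y rfl)
        have hydef : y ∈ JF.defined := by
          have := JF.rules_head r.1 r.2
          rwa [hhead] at this
        have hedge : ∃ z, (y, z) ∈ J.edges := hlc y hyJ hydef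
        have hmv := hmove ⟨y, rfl⟩
        rw [mkStrat_move JF J hyJ hedge] at hmv
        have hr : r = ⟨(y, {z | (y, z) ∈ J.edges}), J.rule_of_internal y hyJ hedge⟩ :=
          Sum.inr.inj hmv
        refine ⟨fun w hw => (nomatch hw), fun r' hr' => ?_⟩
        cases Sum.inr.inj hr'
        rw [hr]
        exact ⟨hyJ, rfl⟩
      · -- b = inr r, c = inl y
        injection heq with h1 h2
        subst h1; subst h2
        have hrinv := ih.2 r rfl
        have hyJ : (r.1.1, y) ∈ J.edges := by
          have h := hbody; rwa [hrinv.2] at h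
        refine ⟨fun w hw => ?_, fun r' hr' => nomatch hr'⟩
        cases Sum.inl.inj hw
        exact (J.edges_mem _ hyJ).2

/-- Forward step: `J`-edges are simulated by two `stepT` moves. -/
lemma step_two (JF : JFrame F) (J : GraphJust JF) {y z : F}
    (hyJ : y ∈ J.nodes) (hz : (y, z) ∈ J.edges) :
    ∃ r : RuleSym JF,
      JF.stepT (mkStrat JF J) (Sum.inl y) (Sum.inr r) ∧
      JF.stepT (mkStrat JF J) (Sum.inr r) (Sum.inl z) := by
  have hedge : ∃ w, (y, w) ∈ J.edges := ⟨z, hz⟩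
  refine ⟨⟨(y, {w | (y, w) ∈ J.edges}), J.rule_of_internal y hyJ hedge⟩, ?_, ?_⟩
  · refine ⟨Or.inl ⟨y, _, rfl, rfl⟩, fun _ => ?_⟩
    rw [mkStrat_move JF J hyJ hedge]
  · exact ⟨Or.inr ⟨_, z, rfl, hz⟩, fun h => absurd h (inr_not_T JF _)⟩

lemma reach_of_rtg (JF : JFrame F) (J : GraphJust JF) {x y : F}
    (h : Relation.ReflTransGen (fun a b => (a, b) ∈ J.edges) x y) :
    Sum.inl y ∈ JF.reachT (mkStrat JF J) x := by
  induction h with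
  | refl => exact Relation.ReflTransGen.refl
  | tail hab hedge ih =>
      rename_i b c
      have hbJ : b ∈ J.nodes := (J.edges_mem _ hedge).1
      obtain ⟨r, h1, h2⟩ := step_two JF J hbJ hedge
      exact (ih.tail h1).tail h2

theorem stmt3 {F : Type} (JF : JFrame F) (J : GraphJust JF) (x : F)
    (hlc : J.LocallyComplete) (hcon : J.Connected) (hroot : J.IsRoot x) :
    ∃ σ : PosStrat JF.game JF.game.T,
      J.nodes = JF.filtNodesT σ x ∧ J.edges = JF.filtEdgesT σ x := by
  classical
  obtain ⟨hxJ, hroot2⟩ := hroot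
  refine ⟨mkStrat JF J, ?_, ?_⟩
  · -- nodes
    apply Set.eq_of_subset_of_subset
    · intro y hy
      exact reach_of_rtg JF J (hroot2 y hy)
    · intro y hy
      exact (reach_inv JF J hlc hxJ _ hy).1 y rfl
  · -- edges
    apply Set.eq_of_subset_of_subset
    · rintro ⟨y, z⟩ he
      have h1J : y ∈ J.nodes := (J.edges_mem _ he).1
      have hreach : Sum.inl y ∈ JF.reachT (mkStrat JF J) x :=
        reach_of_rtg JF J (hroot2 y h1J)
      obtain ⟨r, s1, s2⟩ := step_two JF J h1J he
      exact ⟨r, hreach, s1, s2⟩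
    · rintro ⟨y, z⟩ ⟨r, hreach, h1, h2⟩
      have hyJ : y ∈ J.nodes := (reach_inv JF J hlc hxJ _ hreach).1 y rfl
      have hydef : y ∈ JF.defined := by
        obtain ⟨hE, hmove⟩ := h1
        rcases hE with ⟨y', r', heq, hhead⟩ | ⟨r', y', heq, _⟩
        · injection heq with hh1 hh2
          cases Sum.inl.inj hh1
          have := JF.rules_head r'.1 r'.2
          rwa [hhead] at this
        · injection heq with hh1 hh2
          exact absurd hh1 (by simp)
      have hedge : ∃ w, (y, w) ∈ J.edges := hlc y hyJ hydef
      have hmv := h1.2 ⟨y, rfl⟩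
      rw [mkStrat_move JF J hyJ hedge] at hmv
      have hr : r = ⟨(y, {w | (y, w) ∈ J.edges}), J.rule_of_internal y hyJ hedge⟩ :=
        Sum.inr.inj hmv
      obtain ⟨hE2, _⟩ := h2
      rcases hE2 with ⟨y', r', heq, _⟩ | ⟨r', z', heq, hbody⟩
      · injection heq with hh1 hh2
        exact absurd hh1 (by simp)
      · injection heq with hh1 hh2
        cases Sum.inr.inj hh1
        cases Sum.inl.inj hh2
        rw [hr] at hbody
        exact hbody

end JT
end

section
/- Let JF be a complementary justification frame and τ a positional strategy for player F in the game graph G_JF. For any defined fact x, the play graph of τ in x with rule symbols filtered out and every node label y replaced by ~y is a connected, locally complete graph-like justification with ~x as a root in JF. -/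
namespace JT

section Aux
variable {F : Type}

lemma aux_inr_mem_compl_T (JF : JFrame F) (r : RuleSym JF) : Sum.inr r ∈ JF.game.Tᶜ := by
  rintro ⟨a, h⟩; cases h

lemma aux_inl_mem_T (JF : JFrame F) (y : F) : Sum.inl y ∈ JF.game.T := ⟨y, rfl⟩

lemma aux_edge_inl_inr (JF : JFrame F) (y : F) (r : RuleSym JF) (h : r.1.1 = y) :
    ((Sum.inl y : GState JF), Sum.inr r) ∈ JF.game.E := Or.inl ⟨y, r, rfl, h⟩

lemma aux_edge_inr_inl (JF : JFrame F) (r : RuleSym JF) (z : F) (h : z ∈ r.1.2) :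
    ((Sum.inr r : GState JF), Sum.inl z) ∈ JF.game.E := Or.inr ⟨r, z, rfl, h⟩

lemma aux_compl_inj (JF : JFrame F) {a b : F} (h : JF.compl a = JF.compl b) : a = b := by
  have := congrArg JF.compl h
  rwa [JF.compl_invol, JF.compl_invol] at this

/-- Any rule symbol has an outgoing edge, and τ's move from it lands on a body element. -/
lemma aux_move_spec (JF : JFrame F) (τ : PosStrat JF.game JF.game.Tᶜ) (r : RuleSym JF) :
    ∃ z, τ.move (Sum.inr r) = Sum.inl z ∧ z ∈ r.1.2 := by
  obtain ⟨a, ha⟩ := JF.rules_body_ne r.1 r.2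
  have hmove := τ.move_ok (Sum.inr r) (aux_inr_mem_compl_T JF r)
    ⟨Sum.inl a, aux_edge_inr_inl JF r a ha⟩
  rcases hmove with ⟨x', r', he, _⟩ | ⟨r', y', he, hy⟩
  · rw [Prod.mk.injEq] at he
    exact absurd he.1 (by simp)
  · rw [Prod.mk.injEq] at he
    have hr : r = r' := by
      have := he.1; exact Sum.inr.inj this
    exact ⟨y', he.2, hr ▸ hy⟩

lemma aux_stepF_inl_inr (JF : JFrame F) (τ : PosStrat JF.game JF.game.Tᶜ)
    (y : F) (r : RuleSym JF) (h : r.1.1 = y) :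
    JF.stepF τ (Sum.inl y) (Sum.inr r) :=
  ⟨aux_edge_inl_inr JF y r h, fun hmem => absurd (aux_inl_mem_T JF y) hmem⟩

/-- The head of a rule symbol reached by a step from `inl y` is `y`. -/
lemma aux_stepF_inl_inr_elim (JF : JFrame F) (τ : PosStrat JF.game JF.game.Tᶜ)
    {y : F} {r : RuleSym JF} (h : JF.stepF τ (Sum.inl y) (Sum.inr r)) : r.1.1 = y := by
  rcases h.1 with ⟨x', r', he, hr⟩ | ⟨r', y', he, _⟩
  · rw [Prod.mk.injEq] at he
    have h1 : y = x' := Sum.inl.inj he.1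
    have h2 : r = r' := Sum.inr.inj he.2
    rw [h2, hr, h1]
  · rw [Prod.mk.injEq] at he
    exact absurd he.1 (by simp)

lemma aux_stepF_inr_inl_elim (JF : JFrame F) (τ : PosStrat JF.game JF.game.Tᶜ)
    {r : RuleSym JF} {z : F} (h : JF.stepF τ (Sum.inr r) (Sum.inl z)) :
    Sum.inl z = τ.move (Sum.inr r) :=
  h.2 (aux_inr_mem_compl_T JF r)

/-- Connectivity of the filtered negated play graph along reachability. -/
lemma aux_reach_connect (JF : JFrame F) (τ : PosStrat JF.game JF.game.Tᶜ) (x : F)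
    {s : GState JF} (hs : s ∈ JF.reachF τ x) :
    (∀ y, s = Sum.inl y →
      Relation.ReflTransGen (fun a b => (a, b) ∈ JF.filtEdgesF τ x)
        (JF.compl x) (JF.compl y)) ∧
    (∀ r : RuleSym JF, s = Sum.inr r → ∃ y, Sum.inl y ∈ JF.reachF τ x ∧
        JF.stepF τ (Sum.inl y) (Sum.inr r) ∧
        Relation.ReflTransGen (fun a b => (a, b) ∈ JF.filtEdgesF τ x)
          (JF.compl x) (JF.compl y)) := by
  induction hs with
  | refl =>
    constructor
    · rintro y hy
      have : x = y := Sum.inl.inj hy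
      rw [this]
    · rintro r hr; exact absurd hr (by simp)
  | @tail b c hab hbc ih =>
    constructor
    · rintro z rfl
      rcases hbc.1 with ⟨x', r', he, hr⟩ | ⟨r', y', he, hy⟩
      · rw [Prod.mk.injEq] at he
        exact absurd he.2 (by simp)
      · rw [Prod.mk.injEq] at he
        obtain ⟨y, hyreach, hstep, hpath⟩ := ih.2 r' he.1
        have hz : y' = z := Sum.inl.inj he.2.symm
        have hedge : (JF.compl y, JF.compl z) ∈ JF.filtEdgesF τ x :=
          ⟨y, z, r', rfl, hyreach, hstep, he.1 ▸ hbc⟩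
        exact hpath.tail hedge
    · rintro r rfl
      rcases hbc.1 with ⟨x', r', he, hr⟩ | ⟨r', y', he, hy⟩
      · rw [Prod.mk.injEq] at he
        have hr' : r = r' := Sum.inr.inj he.2
        refine ⟨x', he.1 ▸ hab, ?_, ih.1 x' he.1⟩
        rw [hr']
        exact aux_stepF_inl_inr JF τ x' r' hr
      · rw [Prod.mk.injEq] at he
        exact absurd he.2 (by simp)

end Aux

theorem stmt4 {F : Type} (JF : JFrame F) (hc : JF.Complementary)
    (τ : PosStrat JF.game JF.game.Tᶜ) (x : F) (hx : x ∈ JF.defined) :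
    ∃ J : GraphJust JF, J.nodes = JF.filtNodesF τ x ∧ J.edges = JF.filtEdgesF τ x ∧
      J.LocallyComplete ∧ J.Connected ∧ J.IsRoot (JF.compl x) := by
  classical
  -- build the graph justification
  refine ⟨{ nodes := JF.filtNodesF τ x
            edges := JF.filtEdgesF τ x
            edges_mem := ?_
            rule_of_internal := ?_ }, rfl, rfl, ?_, ?_, ?_⟩
  · -- edges_mem
    rintro ⟨w1, w2⟩ ⟨y, z, r, he, hy, h1, h2⟩
    rw [Prod.mk.injEq] at he
    refine ⟨⟨y, he.1, hy⟩, ⟨z, he.2, ?_⟩⟩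
    exact (hy.tail h1).tail h2
  · -- rule_of_internal
    rintro w ⟨y, rfl, hy⟩ ⟨w2, y', z', r', he', hy', h1', h2'⟩
    rw [Prod.mk.injEq] at he'
    have hyy : y = y' := aux_compl_inj JF he'.1
    subst hyy
    have hydef : y ∈ JF.defined := by
      have hr : r'.1.1 = y := aux_stepF_inl_inr_elim JF τ h1'
      have := JF.rules_head r'.1 r'.2
      rwa [hr] at this
    -- selection function from τ
    set sFn : {A : Set F // (y, A) ∈ JF.rules} → F :=
      fun A => Classical.choose (aux_move_spec JF τ ⟨(y, A.1), A.2⟩) with hsFn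
    have sProp : ∀ A : {A : Set F // (y, A) ∈ JF.rules},
        τ.move (Sum.inr ⟨(y, A.1), A.2⟩) = Sum.inl (sFn A) ∧
          sFn A ∈ A.1 :=
      fun A => Classical.choose_spec (aux_move_spec JF τ ⟨(y, A.1), A.2⟩)
    have hrule := hc y hydef ⟨sFn, fun A => (sProp A).2⟩
    have hset : {w2 | (JF.compl y, w2) ∈ JF.filtEdgesF τ x} =
        JF.compl '' Set.range sFn := by
      ext w2
      constructor
      · rintro ⟨y1, z, r, he, hy1, h1, h2⟩
        rw [Prod.mk.injEq] at he
        have : y = y1 := aux_compl_inj JF he.1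
        subst this
        have hr : r.1.1 = y := aux_stepF_inl_inr_elim JF τ h1
        have hrs : (y, r.1.2) ∈ JF.rules := by
          have : r.1 = (y, r.1.2) := by
            rw [← hr]
          rw [← this]; exact r.2
        set A : {A : Set F // (y, A) ∈ JF.rules} := ⟨r.1.2, hrs⟩ with hA
        have hreq : (⟨(y, A.1), A.2⟩ : RuleSym JF) = r := by
          apply Subtype.ext
          show (y, r.1.2) = r.1
          rw [← hr]
        have hmv : Sum.inl z = τ.move (Sum.inr r) := aux_stepF_inr_inl_elim JF τ h2
        have : (Sum.inl z : GState JF) = Sum.inl (sFn A) := by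
          rw [hmv, ← hreq, (sProp A).1]
        have hz : z = sFn A := Sum.inl.inj this
        exact ⟨sFn A, ⟨A, rfl⟩, by rw [he.2, hz]⟩
      · rintro ⟨z, ⟨A, rfl⟩, rfl⟩
        refine ⟨y, sFn A, ⟨(y, A.1), A.2⟩, rfl, hy, ?_, ?_⟩
        · exact aux_stepF_inl_inr JF τ y _ rfl
        · exact ⟨aux_edge_inr_inl JF _ _ (sProp A).2, fun _ => (sProp A).1.symm⟩
    show (JF.compl y, {w2 | (JF.compl y, w2) ∈ JF.filtEdgesF τ x}) ∈ JF.rules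
    rw [hset]
    exact hrule
  · -- LocallyComplete
    rintro w ⟨y, rfl, hy⟩ hwdef
    have hydef : y ∈ JF.defined := by
      have := JF.defined_compl _ hwdef
      rwa [JF.compl_invol] at this
    obtain ⟨A, hA⟩ := JF.rules_ex y hydef
    set r : RuleSym JF := ⟨(y, A), hA⟩ with hr
    obtain ⟨z, hz1, hz2⟩ := aux_move_spec JF τ r
    refine ⟨JF.compl z, y, z, r, rfl, hy, ?_, ?_⟩
    · exact aux_stepF_inl_inr JF τ y r rfl
    · exact ⟨aux_edge_inr_inl JF r z hz2, fun _ => hz1.symm⟩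
  · -- Connected
    rintro w1 ⟨y1, rfl, hy1⟩ w2 ⟨y2, rfl, hy2⟩
    have p1 := (aux_reach_connect JF τ x hy1).1 y1 rfl
    have p2 := (aux_reach_connect JF τ x hy2).1 y2 rfl
    have mono : ∀ {a b : F},
        Relation.ReflTransGen (fun a b => (a, b) ∈ JF.filtEdgesF τ x) a b →
        Relation.ReflTransGen
          (fun a b => (a, b) ∈ JF.filtEdgesF τ x ∨ (b, a) ∈ JF.filtEdgesF τ x) a b := by
      intro a b h
      exact Relation.ReflTransGen.mono (by intro a b h; exact Or.inl h) _ _ h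
    have hsym : Symmetric
        (fun a b => (a, b) ∈ JF.filtEdgesF τ x ∨ (b, a) ∈ JF.filtEdgesF τ x) :=
      fun _ _ h => h.symm
    exact ((@Relation.ReflTransGen.stdSymm _ _ ⟨fun _ _ h => hsym h⟩).symm _ _ (mono p1)).trans (mono p2)
  · -- IsRoot
    refine ⟨⟨x, rfl, Relation.ReflTransGen.refl⟩, ?_⟩
    rintro w ⟨y, rfl, hy⟩
    exact (aux_reach_connect JF τ x hy).1 y rfl

end JT
end

section
/- The supported branch evaluation B_sp, which maps every branch x0 → x1 → ... (of length at least 2) to x1, is monotone and selective with respect to every interpretation. -/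
namespace JT

section Aux

variable {F : Type}

/-- Auxiliary: value of `Bsp` on a prepended branch. -/
lemma Bsp_prepend_aux (JF : JFrame F) {c : Branch F} {x : F} (hc : c.startsAt x)
    (p : List F) :
    Bsp JF (Branch.prepend p c) =
      match p with
      | [] => Bsp JF c
      | [_] => x
      | _ :: q :: _ => q := by
  match p, c with
  | [], .fin l => simp [Branch.prepend, Bsp]
  | [], .inf s => simp [Branch.prepend, Bsp]
  | [a], .fin l =>
      simp only [Branch.startsAt] at hc
      simp [Branch.prepend, Bsp, List.getElem?_cons, ← List.head?_eq_getElem?, hc]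
  | [a], .inf s =>
      simp only [Branch.startsAt] at hc
      simp [Branch.prepend, Bsp, hc]
  | a :: q :: rest, .fin l =>
      simp [Branch.prepend, Bsp]
  | a :: q :: rest, .inf s =>
      simp [Branch.prepend, Bsp]

lemma prepend_append_aux (p w : List F) (c : Branch F) :
    Branch.prepend (p ++ w) c = Branch.prepend p (Branch.prepend w c) := by
  cases c with
  | fin l => simp [Branch.prepend]
  | inf s =>
    simp only [Branch.prepend]
    congr 1
    funext n
    by_cases h1 : n < p.length
    · have h2 : n < (p ++ w).length := by simp; omega
      rw [dif_pos h2, dif_pos h1]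
      exact List.getElem_append_left h1
    · by_cases h3 : n < p.length + w.length
      · have h2 : n < (p ++ w).length := by simpa using h3
        have h4 : n - p.length < w.length := by omega
        rw [dif_pos h2, dif_neg h1, dif_pos h4]
        simp only [List.get_eq_getElem]
        rw [List.getElem_append_right (not_lt.mp h1)]
      · have h2 : ¬ n < (p ++ w).length := by simp; omega
        rw [dif_neg h2, dif_neg h1, dif_neg (by omega : ¬ n - p.length < w.length)]
        congr 1
        simp; omega

lemma startsAt_prepend_aux {w : List F} {k : Branch F} {x : F}
    (hk : k.startsAt x) (hw : w = [] ∨ w.head? = some x) :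
    (Branch.prepend w k).startsAt x := by
  rcases hw with hw | hw
  · subst hw
    cases k with
    | fin l => simpa [Branch.prepend, Branch.startsAt] using hk
    | inf s => simpa [Branch.prepend, Branch.startsAt] using hk
  · cases k with
    | fin l =>
      have : w ≠ [] := by intro e; simp [e] at hw
      simp [Branch.prepend, Branch.startsAt, List.head?_append, hw,
        List.head?_eq_head, this]
      cases w with
      | nil => simp at this
      | cons a t => simp at hw ⊢; simpa using hw
    | inf s =>
      cases w with
      | nil => simp at hw
      | cons a t =>
        simp only [Branch.prepend, Branch.startsAt]
        rw [dif_pos (by simp)]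
        simpa using hw

/-- The periodic sequence repeating a nonempty list. -/
noncomputable def iterSeq (q : List F) (hq : q ≠ []) : ℕ → F :=
  fun n => q[n % q.length]'(Nat.mod_lt _ (List.length_pos_iff.mpr hq))

lemma iter_mem_InfIter {L : Set (List F)} {q : List F} (hqL : q ∈ L) (hq : q ≠ []) :
    (Branch.inf (iterSeq q hq) : Branch F) ∈ InfIter L := by
  refine ⟨fun _ => q, iterSeq q hq, fun _ => hqL, fun _ => hq,
    ⟨fun i => i * q.length, by simp, fun i => by ring, ?_⟩, rfl⟩
  intro i k h
  have h2 : (i * q.length + k) % q.length = k := by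
    rw [Nat.mul_comm, Nat.mul_add_mod, Nat.mod_eq_of_lt h]
  simp only [iterSeq, List.get_eq_getElem]
  congr 1

lemma head_getElem {l : List F} {x : F} (h : l.head? = some x)
    (hl : 0 < l.length) : l[0]'hl = x := by
  cases l with
  | nil => simp at hl
  | cons a t => simp at h ⊢; exact h

lemma flatten_head_aux {x : F} (ls : List (List F))
    (h : ∀ l ∈ ls, l.head? = some x) :
    ls.flatten = [] ∨ ls.flatten.head? = some x := by
  induction ls with
  | nil => left; rfl
  | cons l ls ih =>
    right
    have hl := h l (by simp)
    have hne : l ≠ [] := by intro e; simp [e] at hl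
    rw [List.flatten_cons, List.head?_append_of_ne_nil _ hne]
    exact hl

end Aux

theorem stmt14 {F : Type} (JF : JFrame F) :
    JF.MonotoneBE (Bsp JF) ∧ ∀ I : Interp JF, JF.SelectiveBE (Bsp JF) I := by
  constructor
  · -- Monotonicity
    intro I x hx b1 b2 hb1 hb2 hs1 hs2 p hp hle
    rw [Bsp_prepend_aux JF hs1 p, Bsp_prepend_aux JF hs2 p]
    match p with
    | [] => exact hle
    | [_] => exact le_refl _
    | _ :: q :: _ => exact le_refl _
  · -- Selectivity
    intro I p hp x hx M N hM hN K hK b hb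
    -- it suffices to find c in the target set with equal Bsp value
    suffices h : ∃ c ∈ OmegaSet p M ∪ OmegaSet p N ∪ PrepSet p K,
        I.val (Bsp JF c) = I.val (Bsp JF b) by
      obtain ⟨c, hcmem, hceq⟩ := h
      exact ⟨⟨c, hcmem, le_of_eq hceq⟩, ⟨c, hcmem, le_of_eq hceq.symm⟩⟩
    -- reduce to inner branches: find c0 starting at x in targets with equal Bsp,
    -- given b = prepend p b0 with b0 starting at x
    have key : ∀ b0 : Branch F, b0.startsAt x →
        ∀ c0 : Branch F, c0.startsAt x →
        Bsp JF c0 = Bsp JF b0 →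
        Bsp JF (Branch.prepend p c0) = Bsp JF (Branch.prepend p b0) := by
      intro b0 h0 c0 h1 heq
      rw [Bsp_prepend_aux JF h0 p, Bsp_prepend_aux JF h1 p]
      match p with
      | [] => exact heq
      | [_] => rfl
      | _ :: q :: _ => rfl
    have hloophead : ∀ l ∈ M ∪ N, l.head? = some x := by
      intro l hl
      rcases hl with hl | hl
      · exact (hM l hl).1
      · exact (hN l hl).1
    have hloopne : ∀ l ∈ M ∪ N, l ≠ [] := by
      intro l hl e
      have := hloophead l hl
      simp [e] at this
    -- membership of the q^ω candidate
    have hmemIter : ∀ q ∈ M ∪ N, ∀ hq : q ≠ [],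
        Branch.prepend p (Branch.inf (iterSeq q hq)) ∈
          OmegaSet p M ∪ OmegaSet p N ∪ PrepSet p K := by
      intro q hq hqne
      rcases hq with hq | hq
      · exact Or.inl (Or.inl ⟨_, iter_mem_InfIter hq hqne, rfl⟩)
      · exact Or.inl (Or.inr ⟨_, iter_mem_InfIter hq hqne, rfl⟩)
    have hiterStart : ∀ (q : List F) (hq : q ≠ []), q.head? = some x →
        (Branch.inf (iterSeq q hq)).startsAt x := by
      intro q hq hhead
      show iterSeq q hq 0 = x
      simp only [iterSeq, Nat.zero_mod]
      exact head_getElem hhead _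
    rcases hb with ⟨w, ⟨ls, hls, rfl⟩, k, hkK, rfl⟩ |
      ⟨b0, ⟨f, s, hfL, hfne, ⟨cn, hc0, hcsucc, hcs⟩, rfl⟩, rfl⟩
    · -- b = prepend (p ++ flatten ls) k
      have hkstart := (hK k hkK).2
      rw [prepend_append_aux]
      have hheads : ∀ l ∈ ls, l.head? = some x := fun l hl => hloophead l (hls l hl)
      cases ls with
      | nil =>
        -- w = [], candidate is prepend p k itself
        refine ⟨Branch.prepend p k, Or.inr ⟨k, hkK, rfl⟩, ?_⟩
        congr 1
        exact key _ (startsAt_prepend_aux hkstart (Or.inl rfl)) _ hkstart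
          (Bsp_prepend_aux JF hkstart []).symm
      | cons q ls' =>
        have hqmem : q ∈ M ∪ N := hls q (by simp)
        have hqhead : q.head? = some x := hloophead q hqmem
        have hqne : q ≠ [] := hloopne q hqmem
        refine ⟨_, hmemIter q hqmem hqne, ?_⟩
        congr 1
        have hwstart : (Branch.prepend (q :: ls').flatten k).startsAt x := by
          refine startsAt_prepend_aux hkstart (Or.inr ?_)
          rw [List.flatten_cons, List.head?_append_of_ne_nil _ hqne]
          exact hqhead
        refine key _ hwstart _ (hiterStart q hqne hqhead) ?_
        -- compute both sides
        rw [Bsp_prepend_aux JF hkstart]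
        show iterSeq q hqne 1 = _
        match q, hqhead with
        | [a], hqhead =>
          simp only [iterSeq]
          simp only [List.head?_cons, Option.some.injEq] at hqhead
          subst hqhead
          rcases flatten_head_aux ls' (fun l hl => hloophead l (hls l (by simp [hl])))
            with hfl | hfl
          · simp [hfl]
          · match hls' : ls'.flatten, hfl with
            | y :: t, hfl =>
              simp only [List.head?_cons, Option.some.injEq] at hfl
              simp [hls', hfl]
        | a :: b :: t, hqhead =>
          simp [iterSeq, Nat.mod_eq_of_lt (by simp : 1 < (a :: b :: t).length)]
    · -- b = prepend p (.inf s), s a concatenation of loops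
      have hq0mem : f 0 ∈ M ∪ N := hfL 0
      have hq0head : (f 0).head? = some x := hloophead _ hq0mem
      have hq0ne : f 0 ≠ [] := hfne 0
      have hq0len : 0 < (f 0).length := List.length_pos_iff.mpr hq0ne
      have hs0 : s 0 = x := by
        have := hcs 0 0 hq0len
        rw [hc0] at this
        simpa [head_getElem hq0head hq0len] using this
      refine ⟨_, hmemIter (f 0) hq0mem hq0ne, ?_⟩
      congr 1
      refine key _ (by exact hs0) _ (hiterStart (f 0) hq0ne hq0head) ?_
      show iterSeq (f 0) hq0ne 1 = s 1
      rcases Nat.lt_or_ge 1 (f 0).length with hlen | hlen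
      · have h1 := hcs 0 1 hlen
        rw [hc0] at h1
        simp only [iterSeq, Nat.mod_eq_of_lt hlen]
        simpa using h1.symm
      · -- (f 0).length = 1
        have hlen1 : (f 0).length = 1 := le_antisymm hlen hq0len
        have hq1ne : f 1 ≠ [] := hfne 1
        have hq1len : 0 < (f 1).length := List.length_pos_iff.mpr hq1ne
        have h1 := hcs 1 0 hq1len
        rw [hcsucc 0, hc0, hlen1] at h1
        have hq1head : (f 1).head? = some x := hloophead _ (hfL 1)
        simp only [Nat.add_zero, Nat.zero_add] at h1
        have hs1 : s 1 = x := by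
          rw [h1]
          simpa using head_getElem hq1head hq1len
        simp only [iterSeq, hlen1, Nat.mod_self]
        rw [hs1]
        exact head_getElem hq0head hq0len

end JT
end
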